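/- Let n ≥ 2 and 0 < δ ≤ n. There exists a constant c depending only on n such that for every open set Ω ⊆ ℝⁿ and every sequence of functions fᵢ : Ω → [0, ∞]: ∫_Ω ( Σ_{i=1}^∞ fᵢ(x) ) dH^δ_∞ ≤ c Σ_{i=1}^∞ ∫_Ω fᵢ(x) dH^δ_∞. -/

import Mathlib

open MeasureTheory Metric Set Bornology
open scoped ENNReal NNReal

/-- The `δ`-dimensional Hausdorff content of a set `E ⊆ ℝⁿ`, defined as the infimum of
`∑ᵢ rᵢ^δ` over all countable coverings of `E` by open balls `B(xᵢ, rᵢ)`. -/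
noncomputable def hContent (n : ℕ) (δ : ℝ) (E : Set (EuclideanSpace ℝ (Fin n))) : ℝ≥0∞ :=
  ⨅ (x : ℕ → EuclideanSpace ℝ (Fin n)) (r : ℕ → ℝ≥0)
    (_ : E ⊆ ⋃ i, Metric.ball (x i) (r i)), ∑' i, (r i : ℝ≥0∞) ^ δ

/-- The `δ`-dimensional Hausdorff measure of `E ⊆ ℝⁿ`, obtained from coverings by open balls of
radii at most `ρ`, in the limit `ρ → 0⁺` (equivalently: the supremum over `ρ > 0`, since the
infima increase as `ρ` decreases). -/
noncomputable def hMeasure (n : ℕ) (δ : ℝ) (E : Set (EuclideanSpace ℝ (Fin n))) : ℝ≥0∞ :=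
  ⨆ (ρ : ℝ≥0) (_ : 0 < ρ),
    ⨅ (x : ℕ → EuclideanSpace ℝ (Fin n)) (r : ℕ → ℝ≥0)
      (_ : E ⊆ ⋃ i, Metric.ball (x i) (r i)) (_ : ∀ i, r i ≤ ρ), ∑' i, (r i : ℝ≥0∞) ^ δ

/-- The Choquet integral `∫_Ω f dH^δ_∞ = ∫₀^∞ H^δ_∞({x ∈ Ω : f x > t}) dt` of a
(nonnegative) real-valued function with respect to the Hausdorff content. -/
noncomputable def choquet (n : ℕ) (δ : ℝ) (Ω : Set (EuclideanSpace ℝ (Fin n)))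
    (f : EuclideanSpace ℝ (Fin n) → ℝ) : ℝ≥0∞ :=
  ∫⁻ t in Set.Ioi (0 : ℝ), hContent n δ {x ∈ Ω | t < f x}

/-- The Choquet integral of an `[0,∞]`-valued function with respect to the Hausdorff content. -/
noncomputable def echoquet (n : ℕ) (δ : ℝ) (Ω : Set (EuclideanSpace ℝ (Fin n)))
    (f : EuclideanSpace ℝ (Fin n) → ℝ≥0∞) : ℝ≥0∞ :=
  ∫⁻ t in Set.Ioi (0 : ℝ), hContent n δ {x ∈ Ω | ENNReal.ofReal t < f x}

/-- The centered fractional Hardy–Littlewood maximal function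
`M_κ f (x) = sup_{r>0} r^{κ-n} ∫_{B(x,r)} |f|`. -/
noncomputable def fracMaximal (n : ℕ) (κ : ℝ) (f : EuclideanSpace ℝ (Fin n) → ℝ)
    (x : EuclideanSpace ℝ (Fin n)) : ℝ≥0∞ :=
  ⨆ (r : ℝ) (_ : 0 < r),
    ENNReal.ofReal (r ^ (κ - n)) * ∫⁻ y in Metric.ball x r, ENNReal.ofReal |f y|

/-- The Riesz potential of order `1`: `I₁ f (x) = ∫_{ℝⁿ} |f y| / |x-y|^{n-1} dy`. -/
noncomputable def rieszPot (n : ℕ) (f : EuclideanSpace ℝ (Fin n) → ℝ)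
    (x : EuclideanSpace ℝ (Fin n)) : ℝ≥0∞ :=
  ∫⁻ y, ENNReal.ofReal |f y| / edist x y ^ ((n : ℝ) - 1)

/-- `Ω` is an `(α, β)`-John domain with John center `x₀`: every `x ∈ Ω` can be joined to `x₀`
by a rectifiable curve `γ : [0, L] → Ω` parametrized by arclength (hence `1`-Lipschitz) with
`γ 0 = x`, `γ L = x₀`, `L ≤ β` and `dist (γ t, ∂Ω) ≥ (α/β) t`. -/
def IsJohnDomainWithCenter (n : ℕ) (α β : ℝ) (Ω : Set (EuclideanSpace ℝ (Fin n)))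
    (x₀ : EuclideanSpace ℝ (Fin n)) : Prop :=
  x₀ ∈ Ω ∧ ∀ x ∈ Ω, ∃ L : ℝ, 0 ≤ L ∧ L ≤ β ∧ ∃ γ : ℝ → EuclideanSpace ℝ (Fin n),
    γ 0 = x ∧ γ L = x₀ ∧ (∀ t ∈ Set.Icc 0 L, γ t ∈ Ω) ∧
    LipschitzOnWith 1 γ (Set.Icc 0 L) ∧
    ∀ t ∈ Set.Icc 0 L, α / β * t ≤ Metric.infDist (γ t) (frontier Ω)

/-- `Ω` is an `(α, β)`-John domain. -/
def IsJohnDomain (n : ℕ) (α β : ℝ) (Ω : Set (EuclideanSpace ℝ (Fin n))) : Prop :=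
  ∃ x₀, IsJohnDomainWithCenter n α β Ω x₀


open scoped Classical

section Aux
variable {n : ℕ} {δ : ℝ}

lemma hContent_mono {E F : Set (EuclideanSpace ℝ (Fin n))} (h : E ⊆ F) :
    hContent n δ E ≤ hContent n δ F := by
  refine le_iInf fun x => le_iInf fun r => le_iInf fun hc => ?_
  exact iInf_le_of_le x <| iInf_le_of_le r <| iInf_le_of_le (h.trans hc) le_rfl

lemma hContent_le_tsum_cover (hδ0 : 0 < δ) {ι : Type} [Countable ι]
    {E : Set (EuclideanSpace ℝ (Fin n))} (x : ι → EuclideanSpace ℝ (Fin n)) (r : ι → ℝ≥0)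
    (h : E ⊆ ⋃ i, Metric.ball (x i) (r i)) :
    hContent n δ E ≤ ∑' i, (r i : ℝ≥0∞) ^ δ := by
  obtain ⟨f, hf⟩ := exists_injective_nat ι
  set x' : ℕ → EuclideanSpace ℝ (Fin n) := Function.extend f x (fun _ => 0) with hx'
  set r' : ℕ → ℝ≥0 := Function.extend f r (fun _ => 0) with hr'
  have hballs : ∀ i, Metric.ball (x i) (r i) = Metric.ball (x' (f i)) (r' (f i)) := by
    intro i
    rw [hx', hr', hf.extend_apply, hf.extend_apply]
  have hcov : E ⊆ ⋃ m, Metric.ball (x' m) (r' m) := by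
    intro y hy
    obtain ⟨s, ⟨i, rfl⟩, hys⟩ := h hy
    exact Set.mem_iUnion.2 ⟨f i, by rw [← hballs]; exact hys⟩
  have hsum : ∑' m, (r' m : ℝ≥0∞) ^ δ = ∑' i, (r i : ℝ≥0∞) ^ δ := by
    refine (hf.tsum_eq ?_).symm.trans ?_
    · intro m hm
      by_contra hmem
      have hr0 : r' m = 0 := by
        rw [hr', Function.extend_apply']
        rintro ⟨i, rfl⟩
        exact hmem (Set.mem_range_self i)
      exact hm (by simp only [hr0, ENNReal.coe_zero, ENNReal.zero_rpow_of_pos hδ0])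
    · congr 1
      ext i
      rw [hr', hf.extend_apply]
  rw [← hsum]
  exact iInf_le_of_le x' <| iInf_le_of_le r' <| iInf_le_of_le hcov le_rfl

lemma floor_scale (y : ℝ) (p : ℕ) : ⌊(⌊y⌋ : ℝ) / 2 ^ p⌋ = ⌊y / 2 ^ p⌋ := by
  have hp : (0 : ℝ) < 2 ^ p := by positivity
  have key : ∀ z : ℤ, z ≤ ⌊(⌊y⌋ : ℝ) / 2 ^ p⌋ ↔ z ≤ ⌊y / 2 ^ p⌋ := by
    intro z
    rw [Int.le_floor, Int.le_floor, le_div_iff₀ hp, le_div_iff₀ hp]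
    constructor
    · intro hz
      calc (z : ℝ) * 2 ^ p ≤ (⌊y⌋ : ℝ) := hz
        _ ≤ y := Int.floor_le y
    · intro hz
      have : ((z * 2 ^ p : ℤ) : ℝ) ≤ y := by push_cast; exact hz
      have := Int.le_floor.2 this
      calc (z : ℝ) * 2 ^ p = ((z * 2 ^ p : ℤ) : ℝ) := by push_cast; ring
        _ ≤ (⌊y⌋ : ℝ) := by exact_mod_cast this
  exact le_antisymm ((key _).1 le_rfl) ((key _).2 le_rfl)

/-- index of the generation-`k` dyadic cube containing `x` -/
noncomputable def dIdx (n : ℕ) (k : ℤ) (x : EuclideanSpace ℝ (Fin n)) : Fin n → ℤ :=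
  fun i => ⌊x i * 2 ^ k⌋

/-- index of the generation-`j` ancestor of the cube `(k, m)` (for `j ≤ k`) -/
noncomputable def anc (n : ℕ) (k : ℤ) (m : Fin n → ℤ) (j : ℤ) : Fin n → ℤ :=
  fun i => ⌊(m i : ℝ) * 2 ^ (j - k)⌋

lemma zpow_sub_eq (j k : ℤ) (h : j ≤ k) : (2 : ℝ) ^ (j - k) = ((2 : ℝ) ^ ((k - j).toNat))⁻¹ := by
  rw [← zpow_natCast, Int.toNat_of_nonneg (by omega)]
  rw [← zpow_neg]
  congr 1
  omega

lemma floor_scale' (y : ℝ) (j k : ℤ) (h : j ≤ k) :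
    ⌊(⌊y⌋ : ℝ) * 2 ^ (j - k)⌋ = ⌊y * 2 ^ (j - k)⌋ := by
  rw [zpow_sub_eq j k h]
  rw [← div_eq_mul_inv, ← div_eq_mul_inv]
  exact floor_scale y _

lemma dIdx_anc {j k : ℤ} (h : j ≤ k) (x : EuclideanSpace ℝ (Fin n)) :
    dIdx n j x = anc n k (dIdx n k x) j := by
  funext i
  show ⌊x i * 2 ^ j⌋ = ⌊(⌊x i * 2 ^ k⌋ : ℝ) * 2 ^ (j - k)⌋
  rw [floor_scale' _ j k h]
  congr 1
  rw [mul_assoc, ← zpow_add₀ (two_ne_zero : (2:ℝ) ≠ 0), show k + (j - k) = j from by omega]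

lemma anc_self (k : ℤ) (m : Fin n → ℤ) : anc n k m k = m := by
  funext i
  show ⌊(m i : ℝ) * 2 ^ (k - k)⌋ = m i
  simp

lemma anc_trans {j l k : ℤ} (hjl : j ≤ l) (_hlk : l ≤ k) (m : Fin n → ℤ) :
    anc n l (anc n k m l) j = anc n k m j := by
  funext i
  show ⌊(⌊(m i : ℝ) * 2 ^ (l - k)⌋ : ℝ) * 2 ^ (j - l)⌋ = ⌊(m i : ℝ) * 2 ^ (j - k)⌋
  rw [floor_scale' _ j l hjl]
  congr 1
  rw [mul_assoc, ← zpow_add₀ (two_ne_zero : (2:ℝ) ≠ 0),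
    show l - k + (j - l) = j - k from by omega]

end Aux

section Core
variable {n : ℕ} {δ : ℝ} {ι : Type} [Countable ι]

noncomputable def Scube (n : ℕ) {ι : Type} (K : ι → ℤ) (M : ι → Fin n → ℤ) (lam : ι → ℝ≥0∞)
    (k : ℤ) (m : Fin n → ℤ) : ℝ≥0∞ :=
  ∑' i, if K i ≤ k ∧ M i = anc n k m (K i) then lam i else 0

noncomputable def gfun (n : ℕ) {ι : Type} (K : ι → ℤ) (M : ι → Fin n → ℤ) (lam : ι → ℝ≥0∞)
    (x : EuclideanSpace ℝ (Fin n)) : ℝ≥0∞ :=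
  ∑' i, if dIdx n (K i) x = M i then lam i else 0

variable (K : ι → ℤ) (M : ι → Fin n → ℤ) (lam : ι → ℝ≥0∞)

lemma cond_iff {k : ℤ} (x : EuclideanSpace ℝ (Fin n)) (i : ι) :
    (K i ≤ k ∧ M i = anc n k (dIdx n k x) (K i)) ↔ (K i ≤ k ∧ dIdx n (K i) x = M i) := by
  constructor
  · rintro ⟨h1, h2⟩
    exact ⟨h1, by rw [dIdx_anc h1, h2]⟩
  · rintro ⟨h1, h2⟩
    refine ⟨h1, ?_⟩
    rw [← h2]
    exact dIdx_anc h1 x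

lemma Scube_dIdx_mono {k k' : ℤ} (hkk : k ≤ k') (x : EuclideanSpace ℝ (Fin n)) :
    Scube n K M lam k (dIdx n k x) ≤ Scube n K M lam k' (dIdx n k' x) := by
  refine ENNReal.tsum_le_tsum fun i => ?_
  by_cases h : K i ≤ k ∧ M i = anc n k (dIdx n k x) (K i)
  · rw [if_pos h]
    have h' := (cond_iff K M x i).1 h
    rw [if_pos ((cond_iff K M x i).2 ⟨h'.1.trans hkk, h'.2⟩)]
  · rw [if_neg h]
    exact zero_le

lemma Scube_le_gfun (k : ℤ) (x : EuclideanSpace ℝ (Fin n)) :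
    Scube n K M lam k (dIdx n k x) ≤ gfun n K M lam x := by
  refine ENNReal.tsum_le_tsum fun i => ?_
  by_cases h : K i ≤ k ∧ M i = anc n k (dIdx n k x) (K i)
  · rw [if_pos h, if_pos ((cond_iff K M x i).1 h).2]
  · rw [if_neg h]
    exact zero_le

lemma iSup_Scube (x : EuclideanSpace ℝ (Fin n)) :
    ⨆ k : ℤ, Scube n K M lam k (dIdx n k x) = gfun n K M lam x := by
  refine le_antisymm (iSup_le fun k => Scube_le_gfun K M lam k x) ?_
  rw [gfun, ENNReal.tsum_eq_iSup_sum]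
  refine iSup_le fun s => ?_
  obtain ⟨k₀, hk₀⟩ := Finset.exists_le (s.image K)
  refine le_trans ?_ (le_iSup _ k₀)
  calc ∑ i ∈ s, (if dIdx n (K i) x = M i then lam i else 0)
      ≤ ∑ i ∈ s, (if K i ≤ k₀ ∧ M i = anc n k₀ (dIdx n k₀ x) (K i) then lam i else 0) := by
        refine Finset.sum_le_sum fun i hi => ?_
        by_cases h : dIdx n (K i) x = M i
        · have hKi : K i ≤ k₀ := hk₀ _ (Finset.mem_image_of_mem K hi)
          rw [if_pos h, if_pos ((cond_iff K M x i).2 ⟨hKi, h⟩)]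
        · rw [if_neg h]
          exact zero_le
    _ ≤ Scube n K M lam k₀ (dIdx n k₀ x) := ENNReal.sum_le_tsum s

lemma Scube_split (k : ℤ) (m : Fin n → ℤ) :
    Scube n K M lam k m = Scube n K M lam (k - 1) (anc n k m (k - 1))
      + ∑' i, if K i = k ∧ M i = m then lam i else 0 := by
  rw [Scube, Scube, ← ENNReal.tsum_add]
  refine tsum_congr fun i => ?_
  by_cases hk : K i = k
  · have h2 : ¬(K i ≤ k - 1 ∧ M i = anc n (k-1) (anc n k m (k-1)) (K i)) :=
      fun hc => absurd hc.1 (by omega)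
    rw [if_neg h2, zero_add]
    refine if_congr ⟨fun hc => ⟨hk, ?_⟩, fun hc => ⟨hk.le, ?_⟩⟩ rfl rfl
    · rw [hc.2, hk, anc_self]
    · rw [hk, anc_self]
      exact hc.2
  · by_cases hk' : K i ≤ k - 1
    · have h3 : ¬(K i = k ∧ M i = m) := fun hc => hk hc.1
      rw [if_neg h3, add_zero]
      rw [anc_trans hk' (by omega : k - 1 ≤ k)]
      exact if_congr ⟨fun hc => ⟨hk', hc.2⟩, fun hc => ⟨by omega, hc.2⟩⟩ rfl rfl
    · have h1 : ¬(K i ≤ k ∧ M i = anc n k m (K i)) := fun hc => absurd hc.1 (by omega)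
      have h2 : ¬(K i ≤ k - 1 ∧ M i = anc n (k-1) (anc n k m (k-1)) (K i)) :=
        fun hc => absurd hc.1 (by omega)
      have h3 : ¬(K i = k ∧ M i = m) := fun hc => hk hc.1
      rw [if_neg h1, if_neg h2, if_neg h3, add_zero]

lemma Scube_le_pow_mul (hδ0 : 0 < δ) (k : ℤ) (m : Fin n → ℤ) :
    Scube n K M lam k m ≤ ((2:ℝ≥0∞)^k)^δ * ∑' i, lam i * ((2:ℝ≥0∞)^(-K i))^δ := by
  rw [← ENNReal.tsum_mul_left]
  refine ENNReal.tsum_le_tsum fun i => ?_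
  by_cases h : K i ≤ k ∧ M i = anc n k m (K i)
  · rw [if_pos h]
    have h2 : ((2:ℝ≥0∞)^(-k))^δ ≤ ((2:ℝ≥0∞)^(-K i))^δ :=
      ENNReal.rpow_le_rpow (ENNReal.zpow_le_of_le one_le_two (by omega)) hδ0.le
    calc lam i = (((2:ℝ≥0∞)^k)^δ * ((2:ℝ≥0∞)^(-k))^δ) * lam i := by
          rw [← ENNReal.mul_rpow_of_nonneg _ _ hδ0.le,
            ← ENNReal.zpow_add two_ne_zero ENNReal.ofNat_ne_top k (-k)]
          simp
      _ = ((2:ℝ≥0∞)^k)^δ * (lam i * ((2:ℝ≥0∞)^(-k))^δ) := by ring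
      _ ≤ ((2:ℝ≥0∞)^k)^δ * (lam i * ((2:ℝ≥0∞)^(-K i))^δ) :=
          mul_le_mul_right (mul_le_mul_right h2 _) _
  · rw [if_neg h]
    exact zero_le

lemma exists_stop (hδ0 : 0 < δ)
    (hA : (∑' i, lam i * ((2:ℝ≥0∞)^(-K i))^δ) ≠ ∞) {t : ℝ} (ht : 0 < t)
    {x : EuclideanSpace ℝ (Fin n)} (hx : ENNReal.ofReal t < gfun n K M lam x) :
    ∃ k : ℤ, ENNReal.ofReal t < Scube n K M lam k (dIdx n k x) ∧
      Scube n K M lam (k-1) (dIdx n (k-1) x) ≤ ENNReal.ofReal t := by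
  set A := ∑' i, lam i * ((2:ℝ≥0∞)^(-K i))^δ with hAdef
  have hA0 : A ≠ 0 := by
    intro h0
    have : ∀ i, lam i = 0 := by
      intro i
      have := (ENNReal.tsum_eq_zero.1 h0) i
      rcases mul_eq_zero.1 this with h | h
      · exact h
      · exfalso
        have hb0 : (0:ℝ≥0∞) < (2:ℝ≥0∞)^(-K i) :=
          ENNReal.zpow_pos two_ne_zero ENNReal.ofNat_ne_top _
        have hbt : (2:ℝ≥0∞)^(-K i) ≠ ⊤ :=
          (ENNReal.zpow_lt_top two_ne_zero ENNReal.ofNat_ne_top _).ne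
        exact (ENNReal.rpow_pos hb0 hbt).ne' h
    have hg0 : gfun n K M lam x = 0 := by
      rw [gfun, ENNReal.tsum_eq_zero]
      intro i
      rw [this i]
      simp
    rw [hg0] at hx
    exact absurd hx (by simp)
  -- find k₀ with (2^k₀)^δ * A < ofReal t
  have hk₀ : ∃ k₀ : ℤ, ((2:ℝ≥0∞)^k₀)^δ * A < ENNReal.ofReal t := by
    have hεpos : (0:ℝ≥0∞) < ENNReal.ofReal t / A :=
      ENNReal.div_pos (ENNReal.ofReal_pos.2 ht).ne' hA
    have hc1 : ((2:ℝ≥0∞)⁻¹)^δ < 1 :=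
      ENNReal.rpow_lt_one (ENNReal.inv_lt_one.2 ENNReal.one_lt_two) hδ0
    obtain ⟨p, hp⟩ :=
      ((ENNReal.tendsto_pow_atTop_nhds_zero_of_lt_one hc1).eventually_lt_const hεpos).exists
    refine ⟨-(p:ℤ), ?_⟩
    have he1 : (2:ℝ≥0∞)^(-(p:ℤ)) = (2:ℝ≥0∞)⁻¹ ^ p := by
      rw [ENNReal.zpow_neg, zpow_natCast, ← ENNReal.inv_pow]
    have he2 : ((2:ℝ≥0∞)^(-(p:ℤ)))^δ = (((2:ℝ≥0∞)⁻¹)^δ)^p := by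
      rw [he1, ← ENNReal.rpow_natCast ((2:ℝ≥0∞)⁻¹) p, ← ENNReal.rpow_mul,
        ← ENNReal.rpow_natCast (((2:ℝ≥0∞)⁻¹)^δ) p, ← ENNReal.rpow_mul, mul_comm]
    rw [he2]
    exact ENNReal.mul_lt_of_lt_div hp
  obtain ⟨k₀, hk₀⟩ := hk₀
  have hbdd : ∃ b : ℤ, ∀ k : ℤ, (ENNReal.ofReal t < Scube n K M lam k (dIdx n k x)) → b ≤ k := by
    refine ⟨k₀ + 1, fun k hk => ?_⟩
    by_contra hcon
    push_neg at hcon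
    have hle : Scube n K M lam k (dIdx n k x) ≤ Scube n K M lam k₀ (dIdx n k₀ x) :=
      Scube_dIdx_mono K M lam (by omega) x
    have := hle.trans (Scube_le_pow_mul K M lam hδ0 k₀ _)
    exact absurd hk (not_lt.2 (this.trans hk₀.le))
  have hinh : ∃ k : ℤ, ENNReal.ofReal t < Scube n K M lam k (dIdx n k x) := by
    rw [← iSup_Scube K M lam x] at hx
    exact lt_iSup_iff.1 hx
  obtain ⟨lb, hlb, hmin⟩ := Int.exists_least_of_bdd hbdd hinh
  refine ⟨lb, hlb, ?_⟩
  by_contra hcon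
  push_neg at hcon
  exact absurd (hmin _ hcon) (by omega)

lemma core (hn : 2 ≤ n) (hδ0 : 0 < δ) (hδn : δ ≤ (n:ℝ)) :
    ∫⁻ t in Set.Ioi (0:ℝ), hContent n δ {x | ENNReal.ofReal t < gfun n K M lam x}
      ≤ (n : ℝ≥0∞)^(n:ℕ) * ∑' i, lam i * ((2:ℝ≥0∞)^(-K i))^δ := by
  set A := ∑' i, lam i * ((2:ℝ≥0∞)^(-K i))^δ with hAdef
  by_cases hAtop : A = ∞
  · rw [hAtop, ENNReal.mul_top (pow_ne_zero _ (Nat.cast_ne_zero.2 (by omega : n ≠ 0)))]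
    exact le_top
  have hnn : Nonempty (Fin n) := ⟨⟨0, by omega⟩⟩
  set P : ℝ → ℤ × (Fin n → ℤ) → Prop := fun t km =>
    ENNReal.ofReal t < Scube n K M lam km.1 km.2 ∧
      Scube n K M lam (km.1 - 1) (anc n km.1 km.2 (km.1 - 1)) ≤ ENNReal.ofReal t with hPdef
  set ctr : ℤ × (Fin n → ℤ) → EuclideanSpace ℝ (Fin n) := fun km =>
    (WithLp.equiv 2 (Fin n → ℝ)).symm (fun i => (km.2 i : ℝ) * 2 ^ (-km.1)) with hctrdef
  set rad : ℝ → ℤ × (Fin n → ℤ) → ℝ≥0 := fun t km =>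
    if P t km then (n : ℝ≥0) * 2 ^ (-km.1) else 0 with hraddef
  -- the covering property
  have hcov : ∀ t : ℝ, t ∈ Set.Ioi (0:ℝ) →
      {x | ENNReal.ofReal t < gfun n K M lam x} ⊆ ⋃ km, Metric.ball (ctr km) (rad t km) := by
    intro t ht x hx
    have ht0 : 0 < t := Set.mem_Ioi.1 ht
    obtain ⟨k, hk1, hk2⟩ := exists_stop K M lam hδ0 hAtop ht0 hx
    refine Set.mem_iUnion.2 ⟨(k, dIdx n k x), ?_⟩
    have hPk : P t (k, dIdx n k x) := by
      rw [hPdef]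
      refine ⟨hk1, ?_⟩
      have hanc := dIdx_anc (by omega : k - 1 ≤ k) x
      rw [← hanc]
      exact hk2
    have hradval : rad t (k, dIdx n k x) = (n:ℝ≥0) * 2 ^ (-k) := by
      rw [hraddef]
      exact if_pos hPk
    rw [Metric.mem_ball, hradval]
    have h2kpos : (0:ℝ) < (2:ℝ) ^ (-k) := zpow_pos two_pos _
    have hone : (2:ℝ)^k * 2^(-k) = 1 := by
      rw [← zpow_add₀ (two_ne_zero : (2:ℝ) ≠ 0)]
      simp
    have hcoord : ∀ i : Fin n, dist (x i) (ctr (k, dIdx n k x) i) < (2:ℝ)^(-k) := by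
      intro i
      have hc : ctr (k, dIdx n k x) i = (⌊x i * 2 ^ k⌋ : ℝ) * 2 ^ (-k) := by
        rw [hctrdef]
        rfl
      rw [Real.dist_eq, hc]
      have hfl : (⌊x i * 2 ^ k⌋ : ℝ) ≤ x i * 2 ^ k := Int.floor_le _
      have hfl2 : x i * 2 ^ k < (⌊x i * 2 ^ k⌋ : ℝ) + 1 := Int.lt_floor_add_one _
      have hx1 : (⌊x i * 2 ^ k⌋ : ℝ) * 2 ^ (-k) ≤ x i := by
        have h := mul_le_mul_of_nonneg_right hfl h2kpos.le
        rwa [mul_assoc, hone, mul_one] at h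
      have hx2 : x i < (⌊x i * 2 ^ k⌋ : ℝ) * 2 ^ (-k) + 2 ^ (-k) := by
        have h := mul_lt_mul_of_pos_right hfl2 h2kpos
        rw [mul_assoc, hone, mul_one, add_mul, one_mul] at h
        exact h
      rw [abs_sub_lt_iff]
      constructor <;> linarith
    have hnR : (1:ℝ) ≤ (n:ℝ) := by exact_mod_cast (by omega : 1 ≤ n)
    have hdist : dist x (ctr (k, dIdx n k x)) < (n:ℝ) * 2 ^ (-k) := by
      rw [EuclideanSpace.dist_eq, Real.sqrt_lt' (by positivity)]
      calc ∑ i, dist (x i) (ctr (k, dIdx n k x) i) ^ 2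
          < ∑ _i : Fin n, ((2:ℝ)^(-k))^2 := by
            refine Finset.sum_lt_sum_of_nonempty Finset.univ_nonempty fun i _ => ?_
            exact pow_lt_pow_left₀ (hcoord i) dist_nonneg (by norm_num)
        _ = (n:ℝ) * ((2:ℝ)^(-k))^2 := by
            rw [Finset.sum_const, Finset.card_univ, Fintype.card_fin, nsmul_eq_mul]
        _ ≤ ((n:ℝ) * 2^(-k))^2 := by nlinarith [sq_nonneg ((2:ℝ)^(-k))]
    have hcast : ((((n:ℝ≥0) * 2^(-k)) : ℝ≥0) : ℝ) = (n:ℝ) * 2^(-k) := by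
      push_cast
      ring
    rw [hcast]
    exact hdist
  -- measurability of the stopping time sets
  have hmeas_set : ∀ km : ℤ × (Fin n → ℤ), MeasurableSet {t : ℝ | P t km} := by
    intro km
    have hset : {t : ℝ | P t km} = ENNReal.ofReal ⁻¹'
        (Set.Iio (Scube n K M lam km.1 km.2) ∩
          Set.Ici (Scube n K M lam (km.1 - 1) (anc n km.1 km.2 (km.1 - 1)))) := by
      ext t
      simp only [hPdef, Set.mem_preimage, Set.mem_inter_iff, Set.mem_Iio, Set.mem_Ici,
        Set.mem_setOf_eq]
    rw [hset]
    exact ENNReal.measurable_ofReal (measurableSet_Iio.inter measurableSet_Ici)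
  set c : ℤ × (Fin n → ℤ) → ℝ≥0∞ := fun km => ((((n:ℝ≥0) * 2^(-km.1)) : ℝ≥0) : ℝ≥0∞)^δ with hcdef
  have hfun_eq : ∀ km : ℤ × (Fin n → ℤ), (fun t : ℝ => ((rad t km : ℝ≥0∞))^δ)
      = fun t : ℝ => Set.indicator {t : ℝ | P t km} (fun _ => c km) t := by
    intro km
    funext t
    by_cases h : P t km
    · have hr : rad t km = (n:ℝ≥0) * 2^(-km.1) := by rw [hraddef]; exact if_pos h
      rw [hr, Set.indicator_of_mem (show t ∈ {t : ℝ | P t km} from h)]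
    · have hr : rad t km = 0 := by rw [hraddef]; exact if_neg h
      rw [hr, Set.indicator_of_notMem (show t ∉ {t : ℝ | P t km} from h), ENNReal.coe_zero,
        ENNReal.zero_rpow_of_pos hδ0]
  -- volume estimate
  have hvol : ∀ km : ℤ × (Fin n → ℤ),
      volume ({t : ℝ | P t km} ∩ Set.Ioi 0) ≤ ∑' i, if K i = km.1 ∧ M i = km.2 then lam i else 0 := by
    intro km
    set b := Scube n K M lam (km.1 - 1) (anc n km.1 km.2 (km.1 - 1)) with hbdef
    set d := ∑' i, if K i = km.1 ∧ M i = km.2 then lam i else 0 with hddef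
    have hsplit : Scube n K M lam km.1 km.2 = b + d := Scube_split K M lam km.1 km.2
    by_cases hb : b = ∞
    · have hempty : {t : ℝ | P t km} ∩ Set.Ioi 0 = ∅ := by
        ext t
        simp only [Set.mem_inter_iff, Set.mem_setOf_eq, Set.mem_empty_iff_false, iff_false,
          not_and, hPdef]
        rintro ⟨h1, h2⟩
        exfalso
        rw [← hbdef, hb] at h2
        exact absurd (top_le_iff.1 h2) ENNReal.ofReal_ne_top
      rw [hempty]
      simp
    · by_cases hd : d = ∞
      · rw [hd]
        exact le_top
      · have hsub : {t : ℝ | P t km} ∩ Set.Ioi 0 ⊆ Set.Ico b.toReal (b.toReal + d.toReal) := by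
          rintro t ⟨hPt, ht0⟩
          rw [hPdef] at hPt
          obtain ⟨h1, h2⟩ := hPt
          have ht0' : (0:ℝ) < t := ht0
          constructor
          · exact (ENNReal.le_ofReal_iff_toReal_le hb ht0'.le).1 h2
          · have hane : b + d ≠ ∞ := ENNReal.add_ne_top.2 ⟨hb, hd⟩
            have h3 := (ENNReal.ofReal_lt_iff_lt_toReal ht0'.le hane).1 (by rw [← hsplit]; exact h1)
            rwa [ENNReal.toReal_add hb hd] at h3
        refine le_trans (measure_mono hsub) ?_
        rw [Real.volume_Ico, show b.toReal + d.toReal - b.toReal = d.toReal from by ring,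
          ENNReal.ofReal_toReal hd]
  -- put everything together
  have step1 : ∫⁻ t in Set.Ioi (0:ℝ), hContent n δ {x | ENNReal.ofReal t < gfun n K M lam x}
      ≤ ∫⁻ t in Set.Ioi (0:ℝ), ∑' km : ℤ × (Fin n → ℤ), ((rad t km : ℝ≥0∞))^δ := by
    refine setLIntegral_mono (Measurable.ennreal_tsum fun km => ?_) fun t ht => ?_
    · rw [hfun_eq km]
      exact measurable_const.indicator (hmeas_set km)
    · exact hContent_le_tsum_cover hδ0 ctr (fun km => rad t km) (hcov t ht)
  have step2 : ∫⁻ t in Set.Ioi (0:ℝ), ∑' km : ℤ × (Fin n → ℤ), ((rad t km : ℝ≥0∞))^δ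
      = ∑' km : ℤ × (Fin n → ℤ), ∫⁻ t in Set.Ioi (0:ℝ), ((rad t km : ℝ≥0∞))^δ := by
    refine lintegral_tsum fun km => ?_
    rw [hfun_eq km]
    exact (measurable_const.indicator (hmeas_set km)).aemeasurable
  have step3 : ∀ km : ℤ × (Fin n → ℤ), ∫⁻ t in Set.Ioi (0:ℝ), ((rad t km : ℝ≥0∞))^δ
      ≤ c km * ∑' i, if K i = km.1 ∧ M i = km.2 then lam i else 0 := by
    intro km
    rw [hfun_eq km, lintegral_indicator (hmeas_set km), setLIntegral_const,
      Measure.restrict_apply (hmeas_set km)]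
    exact mul_le_mul_right (hvol km) _
  have step4 : ∑' km : ℤ × (Fin n → ℤ),
      (c km * ∑' i, if K i = km.1 ∧ M i = km.2 then lam i else 0)
      ≤ (n : ℝ≥0∞)^(n:ℕ) * A := by
    have hswap : ∀ km : ℤ × (Fin n → ℤ),
        c km * (∑' i, if K i = km.1 ∧ M i = km.2 then lam i else 0)
        = ∑' i, (if K i = km.1 ∧ M i = km.2 then c km * lam i else 0) := by
      intro km
      rw [← ENNReal.tsum_mul_left]
      exact tsum_congr fun i => by rw [mul_ite, mul_zero]
    calc ∑' km : ℤ × (Fin n → ℤ), (c km * ∑' i, if K i = km.1 ∧ M i = km.2 then lam i else 0)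
        = ∑' (km : ℤ × (Fin n → ℤ)) (i : ι), (if K i = km.1 ∧ M i = km.2 then c km * lam i else 0) :=
          tsum_congr hswap
      _ = ∑' (i : ι) (km : ℤ × (Fin n → ℤ)), (if K i = km.1 ∧ M i = km.2 then c km * lam i else 0) :=
          ENNReal.tsum_comm
      _ = ∑' i : ι, c (K i, M i) * lam i := by
          refine tsum_congr fun i => ?_
          rw [tsum_eq_single (K i, M i) ?_]
          · rw [if_pos ⟨rfl, rfl⟩]
          · intro km hkm
            rw [if_neg]
            rintro ⟨h1, h2⟩
            exact hkm (Prod.ext h1.symm h2.symm)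
      _ ≤ ∑' i : ι, (n : ℝ≥0∞)^(n:ℕ) * (lam i * ((2:ℝ≥0∞)^(-K i))^δ) := by
          refine ENNReal.tsum_le_tsum fun i => ?_
          have hc1 : c (K i, M i) = ((n:ℝ≥0∞))^δ * ((2:ℝ≥0∞)^(-K i))^δ := by
            rw [hcdef]
            push_cast
            rw [ENNReal.mul_rpow_of_nonneg _ _ hδ0.le]
            congr 1
            rw [ENNReal.coe_zpow two_ne_zero]
            norm_num
          have hc2 : ((n:ℝ≥0∞))^δ ≤ (n:ℝ≥0∞)^(n:ℕ) := by
            rw [← ENNReal.rpow_natCast]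
            exact ENNReal.rpow_le_rpow_of_exponent_le
              (by exact_mod_cast (by omega : 1 ≤ n)) hδn
          rw [hc1]
          calc (n:ℝ≥0∞)^δ * ((2:ℝ≥0∞)^(-K i))^δ * lam i
              = (n:ℝ≥0∞)^δ * (lam i * ((2:ℝ≥0∞)^(-K i))^δ) := by ring
            _ ≤ (n:ℝ≥0∞)^(n:ℕ) * (lam i * ((2:ℝ≥0∞)^(-K i))^δ) := mul_le_mul_left hc2 _
      _ = (n : ℝ≥0∞)^(n:ℕ) * A := by rw [ENNReal.tsum_mul_left, ← hAdef]
  refine le_trans step1 (le_trans (le_of_eq step2) (le_trans (ENNReal.tsum_le_tsum step3) step4))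

end Core

section Ball
variable {n : ℕ} {δ : ℝ} {ι : Type} [Countable ι]

lemma coord_dist_le (x y : EuclideanSpace ℝ (Fin n)) (i : Fin n) :
    dist (x i) (y i) ≤ dist x y := by
  rw [EuclideanSpace.dist_eq]
  have h1 : dist (x i) (y i) ^ 2 ≤ ∑ j, dist (x j) (y j) ^ 2 :=
    Finset.single_le_sum (f := fun j => dist (x j) (y j) ^ 2)
      (fun j _ => sq_nonneg _) (Finset.mem_univ i)
  calc dist (x i) (y i) = Real.sqrt (dist (x i) (y i) ^ 2) := (Real.sqrt_sq dist_nonneg).symm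
    _ ≤ Real.sqrt (∑ j, dist (x j) (y j) ^ 2) := Real.sqrt_le_sqrt h1

lemma ballcore (hn : 2 ≤ n) (hδ0 : 0 < δ) (hδn : δ ≤ (n:ℝ))
    (cen : ι → EuclideanSpace ℝ (Fin n)) (r : ι → ℝ≥0) (lam : ι → ℝ≥0∞) :
    ∫⁻ t in Set.Ioi (0:ℝ), hContent n δ
        {x | ENNReal.ofReal t < ∑' i, if x ∈ Metric.ball (cen i) (r i) then lam i else 0}
      ≤ (n : ℝ≥0∞)^(n:ℕ) * ((3:ℝ≥0∞)^n * (2:ℝ≥0∞)^n) * ∑' i, lam i * (r i : ℝ≥0∞)^δ := by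
  classical
  set kk : ι → ℤ := fun i => if r i = 0 then 0 else -⌊Real.logb 2 (2 * (r i : ℝ))⌋ with hkkdef
  set K' : ι × (Fin n → Fin 3) → ℤ := fun p => kk p.1 with hK'def
  set M' : ι × (Fin n → Fin 3) → Fin n → ℤ := fun p => fun i' =>
    ⌊((cen p.1) i' - (r p.1 : ℝ)) * 2 ^ (kk p.1)⌋ + ((p.2 i' : ℕ) : ℤ) with hM'def
  set LAM : ι × (Fin n → Fin 3) → ℝ≥0∞ := fun p => if r p.1 = 0 then 0 else lam p.1 with hLAMdef
  -- scale estimates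
  have hscale : ∀ i : ι, r i ≠ 0 →
      ((2:ℝ)^(-(kk i)) ≤ 2 * (r i : ℝ) ∧ (r i : ℝ) < 2^(-(kk i))) := by
    intro i hri
    have hrpos : (0:ℝ) < (r i : ℝ) := by exact_mod_cast pos_iff_ne_zero.2 hri
    have hkki : kk i = -⌊Real.logb 2 (2 * (r i : ℝ))⌋ := by rw [hkkdef]; exact if_neg hri
    have hu : (2:ℝ) ^ (Real.logb 2 (2 * (r i:ℝ))) = 2 * (r i:ℝ) :=
      Real.rpow_logb (by norm_num) (by norm_num) (mul_pos two_pos hrpos)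
    set u := Real.logb 2 (2 * (r i : ℝ)) with hudef
    constructor
    · rw [hkki, neg_neg]
      calc (2:ℝ) ^ (⌊u⌋:ℤ) = (2:ℝ) ^ ((⌊u⌋:ℤ):ℝ) := (Real.rpow_intCast 2 _).symm
        _ ≤ (2:ℝ) ^ u :=
            Real.rpow_le_rpow_of_exponent_le one_le_two (by exact_mod_cast Int.floor_le u)
        _ = 2 * (r i : ℝ) := hu
    · rw [hkki, neg_neg]
      have h2 : 2 * (r i : ℝ) < (2:ℝ) ^ ((⌊u⌋:ℝ) + 1) := by
        rw [← hu]
        exact Real.rpow_lt_rpow_of_exponent_lt one_lt_two (Int.lt_floor_add_one u)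
      have h3 : (2:ℝ) ^ ((⌊u⌋:ℝ) + 1) = 2 * (2:ℝ) ^ (⌊u⌋:ℤ) := by
        rw [show ((⌊u⌋:ℝ) + 1) = (((⌊u⌋ + 1 : ℤ)):ℝ) from by push_cast; ring,
          Real.rpow_intCast, zpow_add₀ (two_ne_zero : (2:ℝ) ≠ 0)]
        ring
      rw [h3] at h2
      linarith
  -- pointwise domination
  have hpoint : ∀ x : EuclideanSpace ℝ (Fin n),
      (∑' i, if x ∈ Metric.ball (cen i) (r i) then lam i else 0) ≤ gfun n K' M' LAM x := by
    intro x
    rw [gfun, ENNReal.tsum_prod']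
    refine ENNReal.tsum_le_tsum fun i => ?_
    by_cases h : x ∈ Metric.ball (cen i) (r i)
    · rw [if_pos h]
      have hrpos : (0:ℝ) < (r i : ℝ) := lt_of_le_of_lt dist_nonneg (Metric.mem_ball.1 h)
      have hri : r i ≠ 0 := by
        intro h0
        rw [h0] at hrpos
        exact absurd hrpos (by norm_num)
      obtain ⟨hlow, hhigh⟩ := hscale i hri
      have h2kpos : (0:ℝ) < 2 ^ (kk i) := zpow_pos two_pos _
      have hcb : ∀ i' : Fin n, ⌊((cen i) i' - (r i : ℝ)) * 2 ^ (kk i)⌋ ≤ ⌊x i' * 2 ^ (kk i)⌋ ∧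
          ⌊x i' * 2 ^ (kk i)⌋ ≤ ⌊((cen i) i' - (r i : ℝ)) * 2 ^ (kk i)⌋ + 2 := by
        intro i'
        have hco : |x i' - (cen i) i'| ≤ dist x (cen i) := by
          rw [← Real.dist_eq]
          exact coord_dist_le x (cen i) i'
        have hco2 : dist x (cen i) < (r i : ℝ) := Metric.mem_ball.1 h
        have habs := abs_lt.1 (hco.trans_lt hco2)
        have hlb : (cen i) i' - (r i : ℝ) ≤ x i' := by linarith [habs.1]
        have hub : x i' < (cen i) i' + (r i : ℝ) := by linarith [habs.2]
        constructor
        · exact Int.floor_le_floor (mul_le_mul_of_nonneg_right hlb h2kpos.le)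
        · have hrk : (r i : ℝ) * 2 ^ (kk i) < 1 := by
            have hq := mul_lt_mul_of_pos_right hhigh h2kpos
            rwa [← zpow_add₀ (two_ne_zero : (2:ℝ) ≠ 0), neg_add_cancel, zpow_zero] at hq
          have hfl : (((cen i) i' - (r i : ℝ)) * 2 ^ (kk i) : ℝ)
              < (⌊((cen i) i' - (r i : ℝ)) * 2 ^ (kk i)⌋ : ℝ) + 1 := Int.lt_floor_add_one _
          have hx3 : x i' * 2 ^ (kk i) < ((cen i) i' - (r i : ℝ)) * 2 ^ (kk i) + 2 := by
            have h5 : x i' * 2 ^ (kk i) < ((cen i) i' + (r i : ℝ)) * 2 ^ (kk i) :=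
              mul_lt_mul_of_pos_right hub h2kpos
            nlinarith
          have hflt : ⌊x i' * 2 ^ (kk i)⌋ < ⌊((cen i) i' - (r i : ℝ)) * 2 ^ (kk i)⌋ + 3 := by
            apply Int.floor_lt.2
            push_cast
            linarith
          omega
      set jj : Fin n → Fin 3 := fun i' =>
        ⟨(⌊x i' * 2 ^ (kk i)⌋ - ⌊((cen i) i' - (r i : ℝ)) * 2 ^ (kk i)⌋).toNat, by
          have h3 := hcb i'
          omega⟩ with hjjdef
      have hjval : ∀ i' : Fin n, ((jj i' : ℕ) : ℤ)
          = ⌊x i' * 2 ^ (kk i)⌋ - ⌊((cen i) i' - (r i : ℝ)) * 2 ^ (kk i)⌋ := by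
        intro i'
        show (((⌊x i' * 2 ^ (kk i)⌋ - ⌊((cen i) i' - (r i : ℝ)) * 2 ^ (kk i)⌋).toNat : ℕ) : ℤ) = _
        have h3 := hcb i'
        omega
      have hM : dIdx n (K' (i, jj)) x = M' (i, jj) := by
        funext i'
        show ⌊x i' * 2 ^ (kk i)⌋
            = ⌊((cen i) i' - (r i : ℝ)) * 2 ^ (kk i)⌋ + ((jj i' : ℕ) : ℤ)
        rw [hjval i']
        ring
      calc lam i = (if dIdx n (K' (i, jj)) x = M' (i, jj) then LAM (i, jj) else 0) := by
            rw [if_pos hM]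
            simp only [hLAMdef]
            rw [if_neg hri]
        _ ≤ ∑' j : Fin n → Fin 3, (if dIdx n (K' (i, j)) x = M' (i, j) then LAM (i, j) else 0) :=
            ENNReal.le_tsum jj
    · rw [if_neg h]
      exact zero_le
  -- cost estimate
  have hcost : ∑' p : ι × (Fin n → Fin 3), LAM p * ((2:ℝ≥0∞)^(-K' p))^δ
      ≤ (3:ℝ≥0∞)^n * (2:ℝ≥0∞)^n * ∑' i, lam i * (r i : ℝ≥0∞)^δ := by
    rw [ENNReal.tsum_prod', ← ENNReal.tsum_mul_left]
    refine ENNReal.tsum_le_tsum fun i => ?_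
    have hconst : ∑' j : Fin n → Fin 3, LAM (i, j) * ((2:ℝ≥0∞)^(-K' (i, j)))^δ
        = ((3:ℕ)^n : ℕ) * ((if r i = 0 then 0 else lam i) * ((2:ℝ≥0∞)^(-(kk i)))^δ) := by
      rw [tsum_fintype]
      calc ∑ j : Fin n → Fin 3, LAM (i, j) * ((2:ℝ≥0∞)^(-K' (i, j)))^δ
          = ∑ _j : Fin n → Fin 3, (if r i = 0 then 0 else lam i) * ((2:ℝ≥0∞)^(-(kk i)))^δ :=
            Finset.sum_congr rfl (fun j _ => by simp only [hLAMdef, hK'def])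
        _ = ((3:ℕ)^n : ℕ) * ((if r i = 0 then 0 else lam i) * ((2:ℝ≥0∞)^(-(kk i)))^δ) := by
            rw [Finset.sum_const, Finset.card_univ, nsmul_eq_mul]
            congr 2
            rw [Fintype.card_fun]
            simp
    rw [hconst]
    by_cases hri : r i = 0
    · rw [if_pos hri]
      simp
    · rw [if_neg hri]
      have hrp : ((2:ℝ≥0∞)^(-(kk i)))^δ ≤ (2:ℝ≥0∞)^(n:ℕ) * (r i:ℝ≥0∞)^δ := by
        have e1 : (2:ℝ≥0∞)^(-(kk i)) ≤ ((2 * r i : ℝ≥0) : ℝ≥0∞) := by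
          rw [show (2:ℝ≥0∞)^(-(kk i)) = (((2:ℝ≥0)^(-(kk i)) : ℝ≥0) : ℝ≥0∞) from by
            rw [ENNReal.coe_zpow two_ne_zero]; norm_num]
          rw [ENNReal.coe_le_coe, ← NNReal.coe_le_coe]
          push_cast
          exact (hscale i hri).1
        calc ((2:ℝ≥0∞)^(-(kk i)))^δ ≤ (((2 * r i : ℝ≥0) : ℝ≥0∞))^δ :=
              ENNReal.rpow_le_rpow e1 hδ0.le
          _ = (2:ℝ≥0∞)^δ * (r i:ℝ≥0∞)^δ := by
              rw [ENNReal.coe_mul, ENNReal.mul_rpow_of_nonneg _ _ hδ0.le]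
              norm_num
          _ ≤ (2:ℝ≥0∞)^(n:ℕ) * (r i:ℝ≥0∞)^δ := by
              refine mul_le_mul_left ?_ _
              rw [← ENNReal.rpow_natCast]
              exact ENNReal.rpow_le_rpow_of_exponent_le one_le_two hδn
      calc ((3:ℕ)^n : ℕ) * (lam i * ((2:ℝ≥0∞)^(-(kk i)))^δ)
          ≤ ((3:ℕ)^n : ℕ) * (lam i * ((2:ℝ≥0∞)^(n:ℕ) * (r i:ℝ≥0∞)^δ)) :=
            mul_le_mul_right (mul_le_mul_right hrp _) _
        _ = (3:ℝ≥0∞)^n * (2:ℝ≥0∞)^n * (lam i * (r i:ℝ≥0∞)^δ) := by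
            push_cast
            ring
  calc ∫⁻ t in Set.Ioi (0:ℝ), hContent n δ
        {x | ENNReal.ofReal t < ∑' i, if x ∈ Metric.ball (cen i) (r i) then lam i else 0}
      ≤ ∫⁻ t in Set.Ioi (0:ℝ), hContent n δ {x | ENNReal.ofReal t < gfun n K' M' LAM x} :=
        lintegral_mono fun t => hContent_mono fun x hx => lt_of_lt_of_le hx (hpoint x)
    _ ≤ (n : ℝ≥0∞)^(n:ℕ) * ∑' p : ι × (Fin n → Fin 3), LAM p * ((2:ℝ≥0∞)^(-K' p))^δ :=
        core K' M' LAM hn hδ0 hδn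
    _ ≤ (n : ℝ≥0∞)^(n:ℕ) * ((3:ℝ≥0∞)^n * (2:ℝ≥0∞)^n * ∑' i, lam i * (r i : ℝ≥0∞)^δ) :=
        mul_le_mul_right hcost _
    _ = (n : ℝ≥0∞)^(n:ℕ) * ((3:ℝ≥0∞)^n * (2:ℝ≥0∞)^n) * ∑' i, lam i * (r i : ℝ≥0∞)^δ := by
        ring

end Ball

section Assemble
variable {n : ℕ} {δ : ℝ}

lemma exists_cover {E : Set (EuclideanSpace ℝ (Fin n))} {B : ℝ≥0∞} (h : hContent n δ E < B) :
    ∃ (x : ℕ → EuclideanSpace ℝ (Fin n)) (r : ℕ → ℝ≥0),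
      (E ⊆ ⋃ i, Metric.ball (x i) (r i)) ∧ ∑' i, (r i : ℝ≥0∞)^δ < B := by
  rw [hContent, iInf_lt_iff] at h
  obtain ⟨x, h⟩ := h
  rw [iInf_lt_iff] at h
  obtain ⟨r, h⟩ := h
  rw [iInf_lt_iff] at h
  obtain ⟨hc, h⟩ := h
  exact ⟨x, r, hc, h⟩

lemma ofReal_two_zpow (k : ℤ) : ENNReal.ofReal ((2:ℝ)^k) = (2:ℝ≥0∞)^k := by
  rw [show ((2:ℝ)^k) = (((2:ℝ≥0)^k : ℝ≥0) : ℝ) from by push_cast; norm_num,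
    ENNReal.ofReal_coe_nnreal, ENNReal.coe_zpow two_ne_zero]
  norm_num

lemma Ioi_eq_iUnion_Ioc : Set.Ioi (0:ℝ) = ⋃ k : ℤ, Set.Ioc ((2:ℝ)^(k-1)) ((2:ℝ)^k) := by
  ext t
  simp only [Set.mem_Ioi, Set.mem_iUnion, Set.mem_Ioc]
  constructor
  · intro ht
    refine ⟨⌈Real.logb 2 t⌉, ?_, ?_⟩
    · have h1 : ((⌈Real.logb 2 t⌉ - 1 : ℤ) : ℝ) < Real.logb 2 t := by
        have := Int.ceil_lt_add_one (Real.logb 2 t)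
        push_cast
        linarith
      calc (2:ℝ)^(⌈Real.logb 2 t⌉ - 1) = (2:ℝ)^(((⌈Real.logb 2 t⌉ - 1 : ℤ)):ℝ) :=
            (Real.rpow_intCast 2 _).symm
        _ < (2:ℝ)^(Real.logb 2 t) := Real.rpow_lt_rpow_of_exponent_lt one_lt_two h1
        _ = t := Real.rpow_logb two_pos (by norm_num) ht
    · calc t = (2:ℝ)^(Real.logb 2 t) := (Real.rpow_logb two_pos (by norm_num) ht).symm
        _ ≤ (2:ℝ)^((⌈Real.logb 2 t⌉:ℤ):ℝ) :=
            Real.rpow_le_rpow_of_exponent_le one_le_two (by exact_mod_cast Int.le_ceil _)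
        _ = (2:ℝ)^(⌈Real.logb 2 t⌉:ℤ) := Real.rpow_intCast 2 _
  · rintro ⟨k, h1, h2⟩
    exact lt_trans (zpow_pos two_pos _) h1

lemma level_sum_le (Ω : Set (EuclideanSpace ℝ (Fin n))) (f : EuclideanSpace ℝ (Fin n) → ℝ≥0∞) :
    ∑' k : ℤ, (2:ℝ≥0∞)^(k-1) * hContent n δ {x ∈ Ω | ENNReal.ofReal ((2:ℝ)^k) < f x}
      ≤ echoquet n δ Ω f := by
  rw [echoquet, Ioi_eq_iUnion_Ioc, lintegral_iUnion (fun k => measurableSet_Ioc) ?_ _]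
  · refine ENNReal.tsum_le_tsum fun k => ?_
    have hc : ∀ t ∈ Set.Ioc ((2:ℝ)^(k-1)) ((2:ℝ)^k),
        hContent n δ {x ∈ Ω | ENNReal.ofReal ((2:ℝ)^k) < f x}
          ≤ hContent n δ {x ∈ Ω | ENNReal.ofReal t < f x} := by
      intro t ht
      refine hContent_mono fun x hx => ?_
      obtain ⟨hxΩ, hxf⟩ := hx
      exact ⟨hxΩ, lt_of_le_of_lt (ENNReal.ofReal_le_ofReal ht.2) hxf⟩
    calc (2:ℝ≥0∞)^(k-1) * hContent n δ {x ∈ Ω | ENNReal.ofReal ((2:ℝ)^k) < f x}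
        = ∫⁻ _t in Set.Ioc ((2:ℝ)^(k-1)) ((2:ℝ)^k),
            hContent n δ {x ∈ Ω | ENNReal.ofReal ((2:ℝ)^k) < f x} := by
          rw [setLIntegral_const, Real.volume_Ioc,
            show (2:ℝ)^k - (2:ℝ)^(k-1) = (2:ℝ)^(k-1) from by
              have h2k : (2:ℝ)^k = (2:ℝ)^(k-1) * 2 := by
                rw [← zpow_add_one₀ (two_ne_zero : (2:ℝ) ≠ 0) (k-1),
                  show k - 1 + 1 = k from by omega]
              rw [h2k]; ring,
            ofReal_two_zpow, ofReal_two_zpow (k-1), mul_comm]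
        _ ≤ _ := setLIntegral_mono' measurableSet_Ioc hc
  · intro k k' hkk
    rw [Function.onFun, Set.Ioc_disjoint_Ioc]
    rcases lt_or_gt_of_ne hkk with h | h
    · calc (2:ℝ)^k ⊓ (2:ℝ)^k' ≤ (2:ℝ)^k := inf_le_left
        _ ≤ (2:ℝ)^(k'-1) := zpow_le_zpow_right₀ one_le_two (by omega)
        _ ≤ (2:ℝ)^(k-1) ⊔ (2:ℝ)^(k'-1) := le_sup_right
    · calc (2:ℝ)^k ⊓ (2:ℝ)^k' ≤ (2:ℝ)^k' := inf_le_right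
        _ ≤ (2:ℝ)^(k-1) := zpow_le_zpow_right₀ one_le_two (by omega)
        _ ≤ (2:ℝ)^(k-1) ⊔ (2:ℝ)^(k'-1) := le_sup_left

lemma geom_half_one : ∑' m : ℕ, ((2:ℝ≥0∞)⁻¹)^(m+1) = 1 := by
  have h1 : ∀ m : ℕ, ((2:ℝ≥0∞)⁻¹)^(m+1) = (2:ℝ≥0∞)⁻¹ * ((2:ℝ≥0∞)⁻¹)^m := fun m => by
    rw [pow_succ]; ring
  calc ∑' m : ℕ, ((2:ℝ≥0∞)⁻¹)^(m+1) = ∑' m : ℕ, (2:ℝ≥0∞)⁻¹ * ((2:ℝ≥0∞)⁻¹)^m := tsum_congr h1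
    _ = (2:ℝ≥0∞)⁻¹ * ∑' m : ℕ, ((2:ℝ≥0∞)⁻¹)^m := ENNReal.tsum_mul_left
    _ = (2:ℝ≥0∞)⁻¹ * (1 - (2:ℝ≥0∞)⁻¹)⁻¹ := by rw [ENNReal.tsum_geometric]
    _ = 1 := by
        rw [show (1 - (2:ℝ≥0∞)⁻¹) = (2:ℝ≥0∞)⁻¹ from by
          rw [← ENNReal.inv_two_add_inv_two, ENNReal.add_sub_cancel_right (by simp)]]
        rw [inv_inv]
        exact ENNReal.inv_mul_cancel two_ne_zero ENNReal.ofNat_ne_top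

lemma le_tsum_dyadic (v : ℝ≥0∞) :
    v ≤ ∑' k : ℤ, (if ENNReal.ofReal ((2:ℝ)^k) < v then (2:ℝ≥0∞)^(k+1) else 0) := by
  rcases eq_or_ne v 0 with rfl | hv0
  · exact zero_le
  rcases eq_or_ne v ⊤ with rfl | hvt
  · have hall : ∀ m : ℕ, (m : ℝ≥0∞)
        ≤ ∑' k : ℤ, (if ENNReal.ofReal ((2:ℝ)^k) < (⊤:ℝ≥0∞) then (2:ℝ≥0∞)^(k+1) else 0) := by
      intro m
      have hterm : (if ENNReal.ofReal ((2:ℝ)^(m:ℤ)) < (⊤:ℝ≥0∞) then (2:ℝ≥0∞)^((m:ℤ)+1) else 0)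
          = (2:ℝ≥0∞)^((m:ℤ)+1) := if_pos ENNReal.ofReal_lt_top
      have h1 : (m : ℝ≥0∞) ≤ (2:ℝ≥0∞)^((m:ℤ)+1) := by
        calc (m : ℝ≥0∞) ≤ ((2^m : ℕ) : ℝ≥0∞) := by exact_mod_cast (Nat.lt_two_pow_self : m < 2 ^ m).le
          _ = (2:ℝ≥0∞)^(m:ℕ) := by push_cast; norm_num
          _ = (2:ℝ≥0∞)^((m:ℕ):ℤ) := (zpow_natCast _ _).symm
          _ ≤ (2:ℝ≥0∞)^((m:ℤ)+1) := ENNReal.zpow_le_of_le one_le_two (by omega)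
      exact h1.trans (hterm ▸ ENNReal.le_tsum (m:ℤ))
    by_contra hlt
    push_neg at hlt
    obtain ⟨m, hm⟩ := ENNReal.exists_nat_gt hlt.ne_top
    exact absurd (hall m) (not_le.2 hm)
  have hw : 0 < v.toReal := ENNReal.toReal_pos hv0 hvt
  set w := v.toReal with hwdef
  set k₀ := ⌊Real.logb 2 w⌋ with hk₀def
  have hwlt : w < (2:ℝ)^(k₀ + 1) := by
    calc w = (2:ℝ)^(Real.logb 2 w) := (Real.rpow_logb two_pos (by norm_num) hw).symm
      _ < (2:ℝ)^(((k₀ + 1 : ℤ)):ℝ) := by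
          refine Real.rpow_lt_rpow_of_exponent_lt one_lt_two ?_
          push_cast
          exact Int.lt_floor_add_one _
      _ = (2:ℝ)^(k₀ + 1) := Real.rpow_intCast 2 _
  have hk₀w : (2:ℝ)^k₀ ≤ w := by
    calc (2:ℝ)^k₀ = (2:ℝ)^((k₀:ℤ):ℝ) := (Real.rpow_intCast 2 _).symm
      _ ≤ (2:ℝ)^(Real.logb 2 w) :=
          Real.rpow_le_rpow_of_exponent_le one_le_two (by exact_mod_cast Int.floor_le _)
      _ = w := Real.rpow_logb two_pos (by norm_num) hw
  have hcond : ∀ k : ℤ, k ≤ k₀ - 1 → ENNReal.ofReal ((2:ℝ)^k) < v := by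
    intro k hk
    have e1 : (2:ℝ)^k ≤ (2:ℝ)^(k₀-1) := zpow_le_zpow_right₀ one_le_two hk
    have e2 : (2:ℝ)^(k₀-1) * 2 = (2:ℝ)^k₀ := by
      rw [← zpow_add_one₀ (two_ne_zero : (2:ℝ)≠0), show k₀ - 1 + 1 = k₀ from by omega]
    have e3 : (2:ℝ)^k < w := by nlinarith [zpow_pos (two_pos : (0:ℝ) < 2) (k₀-1)]
    calc ENNReal.ofReal ((2:ℝ)^k) < ENNReal.ofReal w := (ENNReal.ofReal_lt_ofReal_iff hw).2 e3
      _ = v := ENNReal.ofReal_toReal hvt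
  have hsub : ∑' q : {k : ℤ // k ≤ k₀ - 1}, (2:ℝ≥0∞)^((q:ℤ)+1)
      ≤ ∑' k : ℤ, (if ENNReal.ofReal ((2:ℝ)^k) < v then (2:ℝ≥0∞)^(k+1) else 0) := by
    have hle := ENNReal.tsum_comp_le_tsum_of_injective
      (Subtype.val_injective : Function.Injective (fun q : {k : ℤ // k ≤ k₀ - 1} => (q : ℤ)))
      (fun k => (if ENNReal.ofReal ((2:ℝ)^k) < v then (2:ℝ≥0∞)^(k+1) else 0))
    refine le_trans (le_of_eq ?_) hle
    refine tsum_congr fun q => ?_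
    rw [if_pos (hcond q q.2)]
  have hequiv : ∑' q : {k : ℤ // k ≤ k₀ - 1}, (2:ℝ≥0∞)^((q:ℤ)+1) = (2:ℝ≥0∞)^(k₀+1) := by
    let e : ℕ ≃ {k : ℤ // k ≤ k₀ - 1} :=
      { toFun := fun p => ⟨k₀ - 1 - p, by omega⟩
        invFun := fun q => (k₀ - 1 - (q:ℤ)).toNat
        left_inv := fun p => by
          show (k₀ - 1 - (k₀ - 1 - (p:ℤ))).toNat = p
          omega
        right_inv := fun q => by
          apply Subtype.ext
          show k₀ - 1 - (((k₀ - 1 - (q:ℤ)).toNat : ℕ) : ℤ) = (q:ℤ)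
          have := q.2
          omega }
    calc ∑' q : {k : ℤ // k ≤ k₀ - 1}, (2:ℝ≥0∞)^((q:ℤ)+1)
        = ∑' p : ℕ, (2:ℝ≥0∞)^((k₀ - 1 - (p:ℤ))+1) := by
          rw [← e.tsum_eq]
          exact tsum_congr fun p => rfl
      _ = ∑' p : ℕ, (2:ℝ≥0∞)^(k₀) * ((2:ℝ≥0∞)⁻¹)^p := by
          refine tsum_congr fun p => ?_
          rw [show k₀ - 1 - (p:ℤ) + 1 = k₀ - (p:ℤ) from by ring,
            ENNReal.zpow_sub two_ne_zero ENNReal.ofNat_ne_top]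
          congr 1
          rw [zpow_natCast, ← ENNReal.inv_pow]
      _ = (2:ℝ≥0∞)^(k₀) * ∑' p : ℕ, ((2:ℝ≥0∞)⁻¹)^p := ENNReal.tsum_mul_left
      _ = (2:ℝ≥0∞)^(k₀) * 2 := by
          rw [ENNReal.tsum_geometric,
            show (1 - (2:ℝ≥0∞)⁻¹) = (2:ℝ≥0∞)⁻¹ from by
              rw [← ENNReal.inv_two_add_inv_two, ENNReal.add_sub_cancel_right (by simp)],
            inv_inv]
      _ = (2:ℝ≥0∞)^(k₀+1) := by
          rw [ENNReal.zpow_add two_ne_zero ENNReal.ofNat_ne_top k₀ 1]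
          norm_num
  have hvle : v ≤ (2:ℝ≥0∞)^(k₀+1) := by
    calc v = ENNReal.ofReal w := (ENNReal.ofReal_toReal hvt).symm
      _ ≤ ENNReal.ofReal ((2:ℝ)^(k₀+1)) := ENNReal.ofReal_le_ofReal hwlt.le
      _ = (2:ℝ≥0∞)^(k₀+1) := ofReal_two_zpow _
  exact hvle.trans (hequiv ▸ hsub)

end Assemble


/-- countable quasi-subadditivity of the Choquet integral w.r.t. the Hausdorff
content. For `0 < δ ≤ n` there is `c = c(n)` such that for every open `Ω ⊆ ℝⁿ` and every
sequence `fᵢ : Ω → [0, ∞]`,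
`∫_Ω (∑ᵢ fᵢ) dH^δ_∞ ≤ c ∑ᵢ ∫_Ω fᵢ dH^δ_∞`. -/
theorem choquet_countably_quasi_subadditive (n : ℕ) (hn : 2 ≤ n) (δ : ℝ)
    (hδ0 : 0 < δ) (hδn : δ ≤ (n : ℝ)) :
    ∃ c : ℝ≥0, 0 < c ∧
      ∀ Ω : Set (EuclideanSpace ℝ (Fin n)), IsOpen Ω →
        ∀ f : ℕ → EuclideanSpace ℝ (Fin n) → ℝ≥0∞,
          echoquet n δ Ω (fun x => ∑' i, f i x) ≤ c * ∑' i, echoquet n δ Ω (f i) := by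
  classical
  have hnpos : (0:ℝ≥0) < (n:ℝ≥0) := by exact_mod_cast (by omega : 0 < n)
  refine ⟨(n:ℝ≥0)^n * 6^n * 4, by positivity, ?_⟩
  intro Ω hΩ f
  set CB : ℝ≥0∞ := (n : ℝ≥0∞)^(n:ℕ) * ((3:ℝ≥0∞)^n * (2:ℝ≥0∞)^n) with hCBdef
  have hCB0 : CB ≠ 0 := by
    rw [hCBdef]
    refine mul_ne_zero (pow_ne_zero _ ?_) (mul_ne_zero (pow_ne_zero _ ?_) (pow_ne_zero _ ?_))
    · exact_mod_cast (by omega : n ≠ 0)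
    · norm_num
    · norm_num
  have hCBtop : CB ≠ ⊤ := by
    rw [hCBdef]
    exact ENNReal.mul_ne_top (ENNReal.pow_ne_top (ENNReal.natCast_ne_top n))
      (ENNReal.mul_ne_top (ENNReal.pow_ne_top (by norm_num)) (ENNReal.pow_ne_top (by norm_num)))
  have hCoe : (((n:ℝ≥0)^n * 6^n * 4 : ℝ≥0) : ℝ≥0∞) = 4 * CB := by
    rw [hCBdef]
    push_cast
    rw [show (6:ℝ≥0∞) = 3 * 2 from by norm_num, mul_pow]
    ring
  set Tot := ∑' i, echoquet n δ Ω (f i) with hTotdef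
  by_cases hTtop : Tot = ⊤
  · rw [hTtop, ENNReal.mul_top]
    · exact le_top
    · exact ENNReal.coe_ne_zero.2 (by positivity)
  refine ENNReal.le_of_forall_pos_le_add fun ε hε _ => ?_
  set ε1 : ℝ≥0∞ := (ε : ℝ≥0∞) / CB with hε1def
  have hε1_0 : ε1 ≠ 0 := by
    rw [hε1def]
    exact (ENNReal.div_pos (by exact_mod_cast hε.ne') hCBtop).ne'
  set ε2 : ℕ → ℤ → ℝ≥0∞ := fun i k =>
    ε1 * (2:ℝ≥0∞)^(-(k+1)) * ((2:ℝ≥0∞)⁻¹)^(i+1)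
      * ((2:ℝ≥0∞)⁻¹)^((Encodable.encode k)+1) with hε2def
  have hhalf0 : (2:ℝ≥0∞)⁻¹ ≠ 0 := by simp
  have hε2_0 : ∀ i k, ε2 i k ≠ 0 := by
    intro i k
    rw [hε2def]
    exact mul_ne_zero (mul_ne_zero (mul_ne_zero hε1_0
      (ENNReal.zpow_pos two_ne_zero ENNReal.ofNat_ne_top _).ne')
      (pow_ne_zero _ hhalf0)) (pow_ne_zero _ hhalf0)
  set Lv : ℕ → ℤ → Set (EuclideanSpace ℝ (Fin n)) := fun i k =>
    {x ∈ Ω | ENNReal.ofReal ((2:ℝ)^k) < f i x} with hLvdef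
  have hLv_fin : ∀ i k, hContent n δ (Lv i k) ≠ ⊤ := by
    intro i k htop
    have h1 : (2:ℝ≥0∞)^(k-1) * hContent n δ (Lv i k) ≤ echoquet n δ Ω (f i) :=
      le_trans (ENNReal.le_tsum k) (level_sum_le Ω (f i))
    rw [htop, ENNReal.mul_top (ENNReal.zpow_pos two_ne_zero ENNReal.ofNat_ne_top _).ne'] at h1
    have h2 : echoquet n δ Ω (f i) ≤ Tot := ENNReal.le_tsum i
    exact hTtop (top_le_iff.1 ((top_le_iff.1 h1) ▸ h2))
  have hex : ∀ i : ℕ, ∀ k : ℤ, ∃ (xc : ℕ → EuclideanSpace ℝ (Fin n)) (rc : ℕ → ℝ≥0),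
      (Lv i k ⊆ ⋃ j, Metric.ball (xc j) (rc j)) ∧
        ∑' j, (rc j : ℝ≥0∞)^δ < hContent n δ (Lv i k) + ε2 i k :=
    fun i k => exists_cover (ENNReal.lt_add_right (hLv_fin i k) (hε2_0 i k))
  choose xc rc hcov hsum using hex
  set cen : ℕ × ℤ × ℕ → EuclideanSpace ℝ (Fin n) := fun p => xc p.1 p.2.1 p.2.2 with hcendef
  set rr : ℕ × ℤ × ℕ → ℝ≥0 := fun p => rc p.1 p.2.1 p.2.2 with hrrdef
  set lam : ℕ × ℤ × ℕ → ℝ≥0∞ := fun p => (2:ℝ≥0∞)^(p.2.1 + 1) with hlamdef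
  have hpoint : ∀ x ∈ Ω, (∑' i, f i x)
      ≤ ∑' p : ℕ × ℤ × ℕ, (if x ∈ Metric.ball (cen p) (rr p) then lam p else 0) := by
    intro x hx
    rw [ENNReal.tsum_prod']
    refine ENNReal.tsum_le_tsum fun i => ?_
    rw [ENNReal.tsum_prod']
    calc f i x ≤ ∑' k : ℤ, (if ENNReal.ofReal ((2:ℝ)^k) < f i x then (2:ℝ≥0∞)^(k+1) else 0) :=
          le_tsum_dyadic _
      _ ≤ ∑' (k : ℤ) (j : ℕ),
            (if x ∈ Metric.ball (cen (i, k, j)) (rr (i, k, j)) then lam (i, k, j) else 0) := by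
          refine ENNReal.tsum_le_tsum fun k => ?_
          by_cases hcond : ENNReal.ofReal ((2:ℝ)^k) < f i x
          · rw [if_pos hcond]
            have hxLv : x ∈ Lv i k := ⟨hx, hcond⟩
            obtain ⟨s, ⟨j₀, rfl⟩, hj₀⟩ := hcov i k hxLv
            have hj₀' : x ∈ Metric.ball (cen (i, k, j₀)) (rr (i, k, j₀)) := hj₀
            calc (2:ℝ≥0∞)^(k+1)
                = (if x ∈ Metric.ball (cen (i, k, j₀)) (rr (i, k, j₀))
                    then lam (i, k, j₀) else 0) := (if_pos hj₀').symm
              _ ≤ _ := ENNReal.le_tsum j₀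
          · rw [if_neg hcond]
            exact zero_le
  have hcost : ∑' p : ℕ × ℤ × ℕ, lam p * ((rr p : ℝ≥0∞))^δ ≤ 4 * Tot + ε1 := by
    rw [ENNReal.tsum_prod']
    have hinner : ∀ i : ℕ, ∑' (q : ℤ × ℕ), lam (i, q) * ((rr (i, q) : ℝ≥0∞))^δ
        ≤ 4 * echoquet n δ Ω (f i) + ε1 * ((2:ℝ≥0∞)⁻¹)^(i+1) := by
      intro i
      rw [ENNReal.tsum_prod']
      calc ∑' (k : ℤ) (j : ℕ), lam (i, k, j) * ((rr (i, k, j) : ℝ≥0∞))^δ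
          = ∑' k : ℤ, (2:ℝ≥0∞)^(k+1) * ∑' j : ℕ, ((rc i k j : ℝ≥0∞))^δ := by
            refine tsum_congr fun k => ?_
            calc ∑' j : ℕ, lam (i, k, j) * ((rr (i, k, j) : ℝ≥0∞))^δ
                = ∑' j : ℕ, (2:ℝ≥0∞)^(k+1) * ((rc i k j : ℝ≥0∞))^δ := tsum_congr fun j => rfl
              _ = (2:ℝ≥0∞)^(k+1) * ∑' j : ℕ, ((rc i k j : ℝ≥0∞))^δ := ENNReal.tsum_mul_left
        _ ≤ ∑' k : ℤ, (2:ℝ≥0∞)^(k+1) * (hContent n δ (Lv i k) + ε2 i k) :=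
            ENNReal.tsum_le_tsum fun k => mul_le_mul_right (hsum i k).le _
        _ = (∑' k : ℤ, (2:ℝ≥0∞)^(k+1) * hContent n δ (Lv i k))
            + ∑' k : ℤ, (2:ℝ≥0∞)^(k+1) * ε2 i k := by
            rw [← ENNReal.tsum_add]
            exact tsum_congr fun k => by ring
        _ ≤ 4 * echoquet n δ Ω (f i) + ε1 * ((2:ℝ≥0∞)⁻¹)^(i+1) := by
            refine add_le_add ?_ ?_
            · have h4 : ∀ k : ℤ, (2:ℝ≥0∞)^(k+1) = 4 * (2:ℝ≥0∞)^(k-1) := by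
                intro k
                rw [show k + 1 = (k-1) + 2 from by ring,
                  ENNReal.zpow_add two_ne_zero ENNReal.ofNat_ne_top (k-1) 2,
                  show ((2:ℝ≥0∞)^(2:ℤ)) = 4 from by
                    rw [show (2:ℤ) = ((2:ℕ):ℤ) from rfl, zpow_natCast]
                    norm_num]
                ring
              calc ∑' k : ℤ, (2:ℝ≥0∞)^(k+1) * hContent n δ (Lv i k)
                  = 4 * ∑' k : ℤ, (2:ℝ≥0∞)^(k-1) * hContent n δ (Lv i k) := by
                    rw [← ENNReal.tsum_mul_left]
                    exact tsum_congr fun k => by rw [h4 k]; ring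
                _ ≤ 4 * echoquet n δ Ω (f i) := mul_le_mul_right (level_sum_le Ω (f i)) _
            · have hsimp : ∀ k : ℤ, (2:ℝ≥0∞)^(k+1) * ε2 i k
                  = ε1 * ((2:ℝ≥0∞)⁻¹)^(i+1) * ((2:ℝ≥0∞)⁻¹)^((Encodable.encode k)+1) := by
                intro k
                rw [hε2def]
                have hcancel : (2:ℝ≥0∞)^(k+1) * (2:ℝ≥0∞)^(-(k+1)) = 1 := by
                  rw [← ENNReal.zpow_add two_ne_zero ENNReal.ofNat_ne_top,
                    show k + 1 + -(k+1) = 0 from by omega, zpow_zero]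
                calc (2:ℝ≥0∞)^(k+1) * (ε1 * (2:ℝ≥0∞)^(-(k+1)) * ((2:ℝ≥0∞)⁻¹)^(i+1)
                      * ((2:ℝ≥0∞)⁻¹)^((Encodable.encode k)+1))
                    = ((2:ℝ≥0∞)^(k+1) * (2:ℝ≥0∞)^(-(k+1))) * (ε1 * ((2:ℝ≥0∞)⁻¹)^(i+1)
                      * ((2:ℝ≥0∞)⁻¹)^((Encodable.encode k)+1)) := by ring
                  _ = ε1 * ((2:ℝ≥0∞)⁻¹)^(i+1) * ((2:ℝ≥0∞)⁻¹)^((Encodable.encode k)+1) := by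
                      rw [hcancel, one_mul]
              calc ∑' k : ℤ, (2:ℝ≥0∞)^(k+1) * ε2 i k
                  = ε1 * ((2:ℝ≥0∞)⁻¹)^(i+1)
                      * ∑' k : ℤ, ((2:ℝ≥0∞)⁻¹)^((Encodable.encode k)+1) := by
                    rw [← ENNReal.tsum_mul_left]
                    exact tsum_congr hsimp
                _ ≤ ε1 * ((2:ℝ≥0∞)⁻¹)^(i+1) * 1 := by
                    refine mul_le_mul_right ?_ _
                    calc ∑' k : ℤ, ((2:ℝ≥0∞)⁻¹)^((Encodable.encode k)+1)
                        ≤ ∑' m : ℕ, ((2:ℝ≥0∞)⁻¹)^(m+1) :=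
                          ENNReal.tsum_comp_le_tsum_of_injective Encodable.encode_injective _
                      _ = 1 := geom_half_one
                _ = ε1 * ((2:ℝ≥0∞)⁻¹)^(i+1) := mul_one _
    calc ∑' (i : ℕ) (q : ℤ × ℕ), lam (i, q) * ((rr (i, q)):ℝ≥0∞)^δ
        ≤ ∑' i : ℕ, (4 * echoquet n δ Ω (f i) + ε1 * ((2:ℝ≥0∞)⁻¹)^(i+1)) :=
          ENNReal.tsum_le_tsum hinner
      _ = 4 * Tot + ε1 * ∑' i : ℕ, ((2:ℝ≥0∞)⁻¹)^(i+1) := by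
          rw [ENNReal.tsum_add, ENNReal.tsum_mul_left, ENNReal.tsum_mul_left]
      _ = 4 * Tot + ε1 := by rw [geom_half_one, mul_one]
  calc echoquet n δ Ω (fun x => ∑' i, f i x)
      ≤ ∫⁻ t in Set.Ioi (0:ℝ), hContent n δ
          {x | ENNReal.ofReal t
            < ∑' p : ℕ × ℤ × ℕ, (if x ∈ Metric.ball (cen p) (rr p) then lam p else 0)} := by
        rw [echoquet]
        refine lintegral_mono fun t => hContent_mono fun x hx => ?_
        obtain ⟨hxΩ, hxlt⟩ := hx
        exact lt_of_lt_of_le hxlt (hpoint x hxΩ)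
    _ ≤ CB * ∑' p : ℕ × ℤ × ℕ, lam p * ((rr p : ℝ≥0∞))^δ := by
        rw [hCBdef]
        exact ballcore hn hδ0 hδn cen rr lam
    _ ≤ CB * (4 * Tot + ε1) := mul_le_mul_right hcost _
    _ = 4 * CB * Tot + CB * ε1 := by ring
    _ = ((((n:ℝ≥0)^n * 6^n * 4 : ℝ≥0)) : ℝ≥0∞) * Tot + ε := by
        rw [hε1def, ENNReal.mul_div_cancel' (fun h => absurd h hCB0) (fun h => absurd h hCBtop), hCoe]
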